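/- Let G₁ and G₂ be connected simple graphs, each on n vertices with m edges, with Laplacian spectra μ₁ ≥ ⋯ ≥ μ_{n−1} > μ_n = 0 and λ₁ ≥ ⋯ ≥ λ_{n−1} > λ_n = 0 respectively, both having algebraic connectivity greater than two. If p is a positive integer such that 2m/(p+n) < min(μ_{n−1} − 2, λ_{n−1} − 2), then LE((Ḡ₁ ∨ K_p) × K_p) = LE((Ḡ₂ ∨ K_p) × K_p). -/

import Mathlib

open SimpleGraph Matrix Finset

/-- The number of edges of a simple graph. -/
noncomputable def edgeCount {V : Type*} (G : SimpleGraph V) : ℕ := G.edgeSet.ncard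

/-- The Laplacian spectrum of a finite simple graph, as a multiset of real numbers. -/
noncomputable def lapSpec {V : Type*} [Fintype V] (G : SimpleGraph V) : Multiset ℝ := by
  classical
  exact Finset.univ.val.map (G.posSemidef_lapMatrix ℝ).1.eigenvalues

/-- The signless Laplacian matrix `D + A` is Hermitian. -/
theorem signless_isHermitian {V : Type*} [Fintype V] [DecidableEq V] (G : SimpleGraph V)
    [DecidableRel G.Adj] : (G.degMatrix ℝ + G.adjMatrix ℝ).IsHermitian := by
  rw [Matrix.IsHermitian, conjTranspose_eq_transpose_of_trivial]
  exact Matrix.IsSymm.add (isSymm_degMatrix ℝ G) (isSymm_adjMatrix G)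

/-- The signless Laplacian spectrum of a finite simple graph, as a multiset of reals. -/
noncomputable def signlessLapSpec {V : Type*} [Fintype V] (G : SimpleGraph V) : Multiset ℝ := by
  classical
  exact Finset.univ.val.map (signless_isHermitian G).eigenvalues

/-- The Laplacian energy `LE(G) = ∑ |μ_i - 2m/n|`. -/
noncomputable def lapEnergy {V : Type*} [Fintype V] (G : SimpleGraph V) : ℝ :=
  ((lapSpec G).map (fun x => |x - 2 * (edgeCount G : ℝ) / (Fintype.card V : ℝ)|)).sum

/-- The signless Laplacian energy `LE⁺(G) = ∑ |μ⁺_i - 2m/n|`. -/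
noncomputable def signlessLapEnergy {V : Type*} [Fintype V] (G : SimpleGraph V) : ℝ :=
  ((signlessLapSpec G).map (fun x => |x - 2 * (edgeCount G : ℝ) / (Fintype.card V : ℝ)|)).sum

/-- The join `G ∨ H` of two graphs: disjoint union plus all edges between them. -/
def SimpleGraph.join {V W : Type*} (G : SimpleGraph V) (H : SimpleGraph W) :
    SimpleGraph (V ⊕ W) where
  Adj a b :=
    match a, b with
    | Sum.inl u, Sum.inl v => G.Adj u v
    | Sum.inr u, Sum.inr v => H.Adj u v
    | Sum.inl _, Sum.inr _ => True
    | Sum.inr _, Sum.inl _ => True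
  symm := ⟨by rintro (u | u) (v | v) h <;> simp_all [adj_comm]⟩
  loopless := ⟨by rintro (u | u) h <;> simp_all⟩

/-- The tensor (Kronecker) product `G ⊗ H` of two graphs. -/
def SimpleGraph.tensorProd {V W : Type*} (G : SimpleGraph V) (H : SimpleGraph W) :
    SimpleGraph (V × W) where
  Adj a b := G.Adj a.1 b.1 ∧ H.Adj a.2 b.2
  symm := ⟨fun a b h => ⟨G.adj_symm h.1, H.adj_symm h.2⟩⟩
  loopless := ⟨fun a h => G.irrefl h.1⟩

section Aux

open SimpleGraph Matrix Finset Polynomial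

variable {V : Type*} [Fintype V] [DecidableEq V]

lemma roots_map_prod (s : Multiset ℝ) : ((s.map (fun r => X - C r)).prod).roots = s := by
  rw [Polynomial.roots_multiset_prod]
  · rw [Multiset.bind_map]
    simp only [Polynomial.roots_X_sub_C]
    rw [Multiset.bind_singleton]; exact Multiset.map_id s
  · intro h
    obtain ⟨r, _, hr⟩ := Multiset.mem_map.mp h
    exact X_sub_C_ne_zero r hr

lemma charpoly_of_conj (A P : Matrix V V ℝ) (hP : IsUnit P.det) (d : V → ℝ)
    (h : A * P = P * diagonal d) : A.charpoly = ∏ i, (X - C (d i)) := by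
  have hQ : IsUnit ((C.mapMatrix P : Matrix V V ℝ[X]).det) := by
    rw [← RingHom.map_det]; exact hP.map _
  have key : charmatrix A * (C.mapMatrix P) = (C.mapMatrix P) * charmatrix (diagonal d) := by
    rw [charmatrix, charmatrix, sub_mul, mul_sub]
    congr 1
    · exact Matrix.scalar_commute (n := V) X (fun r => (Commute.all X r)) (C.mapMatrix P)
    · rw [← RingHom.map_mul, ← RingHom.map_mul, h]
  have hdet := congrArg Matrix.det key
  rw [det_mul, det_mul] at hdet
  have h2 : A.charpoly = (diagonal d).charpoly :=
    hQ.mul_left_cancel ((mul_comm _ _).trans hdet)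
  have h3 : charmatrix (diagonal d) = diagonal (fun i => X - C (d i)) := by
    ext i j
    by_cases hij : i = j
    · subst hij; simp [charmatrix_apply]
    · simp [charmatrix_apply, diagonal_apply_ne _ hij, hij]
  rw [h2, charpoly, h3, det_diagonal]

lemma charpoly_eigen (A : Matrix V V ℝ) (hA : A.IsHermitian) :
    A * (hA.eigenvectorUnitary : Matrix V V ℝ) =
      (hA.eigenvectorUnitary : Matrix V V ℝ) * diagonal hA.eigenvalues ∧
    IsUnit (hA.eigenvectorUnitary : Matrix V V ℝ).det := by
  constructor
  · have hd : diagonal ((RCLike.ofReal : ℝ → ℝ) ∘ hA.eigenvalues) = diagonal hA.eigenvalues := by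
      congr 1
    calc A * (hA.eigenvectorUnitary : Matrix V V ℝ)
        = ((hA.eigenvectorUnitary : Matrix V V ℝ) * diagonal ((RCLike.ofReal : ℝ → ℝ) ∘ hA.eigenvalues)
            * (star (hA.eigenvectorUnitary : Matrix V V ℝ))) * (hA.eigenvectorUnitary : Matrix V V ℝ) := by
          rw [← Unitary.conjStarAlgAut_apply (S := ℝ), ← hA.spectral_theorem]
      _ = (hA.eigenvectorUnitary : Matrix V V ℝ) * diagonal hA.eigenvalues := by
          rw [mul_assoc, Unitary.coe_star_mul_self, mul_one, hd]
  · have h1 : (star (hA.eigenvectorUnitary : Matrix V V ℝ)) * hA.eigenvectorUnitary = 1 :=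
      Unitary.coe_star_mul_self _
    have := congrArg Matrix.det h1
    rw [det_mul, det_one] at this
    exact IsUnit.of_mul_eq_one _ ((mul_comm _ _).trans this)

/-- If `A` is Hermitian and `A P = P diag d` with `P` invertible, the eigenvalue multiset is `d`. -/
lemma spec_eq_of (A : Matrix V V ℝ) (hA : A.IsHermitian) (P : Matrix V V ℝ)
    (hP : IsUnit P.det) (d : V → ℝ) (h : A * P = P * diagonal d) :
    Finset.univ.val.map hA.eigenvalues = Finset.univ.val.map d := by
  obtain ⟨h1, h2⟩ := charpoly_eigen A hA
  have e1 := charpoly_of_conj A _ h2 _ h1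
  have e2 := charpoly_of_conj A P hP d h
  have : ((Finset.univ.val.map hA.eigenvalues).map (fun r => X - C r)).prod
      = ((Finset.univ.val.map d).map (fun r => X - C r)).prod := by
    rw [Multiset.map_map, Multiset.map_map]
    exact (e1.symm.trans e2 :)
  have := congrArg Polynomial.roots this
  rwa [roots_map_prod, roots_map_prod] at this

lemma trace_eq_of (A P : Matrix V V ℝ) (hP : IsUnit P.det) (d : V → ℝ)
    (h : A * P = P * diagonal d) : A.trace = ∑ i, d i := by
  have : A = P * diagonal d * P⁻¹ := by
    rw [← h, mul_assoc, Matrix.mul_nonsing_inv _ hP, mul_one]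
  rw [this, Matrix.trace_mul_cycle, Matrix.nonsing_inv_mul _ hP, one_mul, trace_diagonal]

section Stage2
open SimpleGraph Matrix Finset
variable {V : Type*} [Fintype V] [DecidableEq V]

lemma eig_congr {A B : Matrix V V ℝ} (h : A = B) (hA : A.IsHermitian) (hB : B.IsHermitian) :
    hA.eigenvalues = hB.eigenvalues := by subst h; rfl

lemma lapSpec_eq_of (G : SimpleGraph V) [DecidableRel G.Adj]
    (P : Matrix V V ℝ) (hP : IsUnit P.det) (d : V → ℝ)
    (h : G.lapMatrix ℝ * P = P * diagonal d) : lapSpec G = Finset.univ.val.map d := by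
  classical
  have h0 : lapSpec G = Finset.univ.val.map (G.posSemidef_lapMatrix ℝ).1.eigenvalues := by
    unfold lapSpec
    congr!
  rw [h0]
  exact spec_eq_of _ (G.posSemidef_lapMatrix ℝ).1 P hP d h

lemma lap_mulVec (G : SimpleGraph V) [DecidableRel G.Adj] (x : V → ℝ) (v : V) :
    (G.lapMatrix ℝ *ᵥ x) v = ∑ u, (if G.Adj v u then x v - x u else 0) := by
  rw [lapMatrix_mulVec_apply, degree_eq_sum_if_adj]
  rw [neighborFinset_eq_filter, sum_filter]
  rw [sum_mul, ← Finset.sum_sub_distrib]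
  congr 1; ext u
  by_cases h : G.Adj v u <;> simp [h]

lemma sum_lap_mulVec (G : SimpleGraph V) [DecidableRel G.Adj] (x : V → ℝ) :
    ∑ v, (G.lapMatrix ℝ *ᵥ x) v = 0 := by
  simp only [lap_mulVec]
  rw [← Finset.sum_product']
  set S := ∑ z ∈ univ ×ˢ univ, (if G.Adj z.1 z.2 then x z.1 - x z.2 else 0) with hSdef
  have h1 : S = -S := by
    calc S = ∑ z ∈ univ ×ˢ univ, - (if G.Adj z.2 z.1 then x z.2 - x z.1 else 0) := by
          refine Finset.sum_congr rfl (fun z _ => ?_)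
          by_cases h : G.Adj z.1 z.2
          · simp only [h, if_pos, h.symm]; ring
          · rw [if_neg h, if_neg (fun hh => h (SimpleGraph.Adj.symm hh)), neg_zero]
      _ = - ∑ z ∈ univ ×ˢ univ, (if G.Adj z.2 z.1 then x z.2 - x z.1 else 0) := by
          rw [Finset.sum_neg_distrib]
      _ = -S := by
          rw [hSdef]
          congr 1
          have : (univ ×ˢ univ : Finset (V × V)) = univ := by simp
          rw [this]
          exact Fintype.sum_equiv (Equiv.prodComm V V)
            (fun z => if G.Adj z.2 z.1 then x z.2 - x z.1 else 0)
            (fun z => if G.Adj z.1 z.2 then x z.1 - x z.2 else 0) (fun z => rfl)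
  linarith

end Stage2

section Stage3
open SimpleGraph Matrix Finset

variable {V W : Type*} [Fintype V] [Fintype W] [DecidableEq V] [DecidableEq W]

lemma lap_box_mulVec (Gv : SimpleGraph V) (Gw : SimpleGraph W)
    [DecidableRel Gv.Adj] [DecidableRel Gw.Adj] [DecidableRel (Gv □ Gw).Adj]
    (u : V → ℝ) (f : W → ℝ) (z : V × W) :
    ((Gv □ Gw).lapMatrix ℝ *ᵥ fun y => u y.1 * f y.2) z =
      ((Gv.lapMatrix ℝ *ᵥ u) z.1) * f z.2 + u z.1 * ((Gw.lapMatrix ℝ *ᵥ f) z.2) := by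
  rw [lap_mulVec, lap_mulVec, lap_mulVec]
  rw [Fintype.sum_prod_type]
  have key : ∀ t r, (if (Gv □ Gw).Adj z (t, r) then u z.1 * f z.2 - u t * f r else 0) =
      (if z.2 = r ∧ Gv.Adj z.1 t then (u z.1 - u t) * f z.2 else 0) +
      (if z.1 = t ∧ Gw.Adj z.2 r then u z.1 * (f z.2 - f r) else 0) := by
    intro t r
    have hadj : (Gv □ Gw).Adj z (t, r) ↔ (Gv.Adj z.1 t ∧ z.2 = r) ∨ (Gw.Adj z.2 r ∧ z.1 = t) :=
      SimpleGraph.boxProd_adj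
    by_cases h1 : Gv.Adj z.1 t ∧ z.2 = r
    · have h2 : ¬ (z.1 = t ∧ Gw.Adj z.2 r) := by
        rintro ⟨he, -⟩; exact Gv.irrefl (he ▸ h1.1)
      rw [if_pos (hadj.mpr (Or.inl h1)), if_pos ⟨h1.2, h1.1⟩, if_neg h2]
      rw [← h1.2]; ring
    · by_cases h2 : Gw.Adj z.2 r ∧ z.1 = t
      · have h1' : ¬ (z.2 = r ∧ Gv.Adj z.1 t) := fun hh => h1 ⟨hh.2, hh.1⟩
        rw [if_pos (hadj.mpr (Or.inr h2)), if_neg h1', if_pos ⟨h2.2, h2.1⟩]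
        rw [← h2.2]; ring
      · have : ¬ (Gv □ Gw).Adj z (t, r) := fun hh => by
          rcases hadj.mp hh with h | h
          · exact h1 h
          · exact h2 h
        rw [if_neg this, if_neg (fun hh => h1 ⟨hh.2, hh.1⟩), if_neg (fun hh => h2 ⟨hh.2, hh.1⟩)]
        ring
  calc (∑ t, ∑ r, if (Gv □ Gw).Adj z (t, r) then u z.1 * f z.2 - u t * f r else 0)
      = ∑ t, ∑ r, ((if z.2 = r ∧ Gv.Adj z.1 t then (u z.1 - u t) * f z.2 else 0) +
          (if z.1 = t ∧ Gw.Adj z.2 r then u z.1 * (f z.2 - f r) else 0)) := by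
        exact Finset.sum_congr rfl fun t _ => Finset.sum_congr rfl fun r _ => key t r
    _ = (∑ t, ∑ r, (if z.2 = r ∧ Gv.Adj z.1 t then (u z.1 - u t) * f z.2 else 0)) +
        (∑ t, ∑ r, (if z.1 = t ∧ Gw.Adj z.2 r then u z.1 * (f z.2 - f r) else 0)) := by
        rw [← Finset.sum_add_distrib]
        exact Finset.sum_congr rfl fun t _ => Finset.sum_add_distrib
    _ = _ := by
        congr 1
        · have : ∀ t, (∑ r, if z.2 = r ∧ Gv.Adj z.1 t then (u z.1 - u t) * f z.2 else 0)
              = if Gv.Adj z.1 t then (u z.1 - u t) * f z.2 else 0 := by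
            intro t
            simp only [ite_and]
            rw [Finset.sum_ite_eq]
            simp
          rw [Finset.sum_congr rfl fun t _ => this t, Finset.sum_mul]
          congr 1; ext t
          by_cases h : Gv.Adj z.1 t <;> simp [h]
        · have : ∀ t, (∑ r, if z.1 = t ∧ Gw.Adj z.2 r then u z.1 * (f z.2 - f r) else 0)
              = if z.1 = t then (∑ r, if Gw.Adj z.2 r then u z.1 * (f z.2 - f r) else 0) else 0 := by
            intro t
            simp only [ite_and]
            split_ifs <;> simp
          rw [Finset.sum_congr rfl fun t _ => this t, Finset.sum_ite_eq]
          simp only [mem_univ, if_pos]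
          rw [Finset.mul_sum]
          congr 1; ext r
          by_cases h : Gw.Adj z.2 r <;> simp [h]

lemma lap_top_mulVec (f : W → ℝ) (l : W) :
    ((⊤ : SimpleGraph W).lapMatrix ℝ *ᵥ f) l = (Fintype.card W : ℝ) * f l - ∑ r, f r := by
  rw [lap_mulVec]
  have : ∀ r : W, (if (⊤ : SimpleGraph W).Adj l r then f l - f r else 0) = f l - f r := by
    intro r
    by_cases h : l = r
    · subst h; simp
    · rw [if_pos (by simpa using h : (⊤ : SimpleGraph W).Adj l r)]
  rw [Finset.sum_congr rfl fun r _ => this r, Finset.sum_sub_distrib]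
  simp [Finset.card_univ, mul_comm]

end Stage3

set_option linter.unusedSectionVars false
section Stage4
open SimpleGraph Matrix Finset

variable {V W : Type*} [Fintype V] [Fintype W] [DecidableEq V] [DecidableEq W]
variable (G : SimpleGraph V) [DecidableRel G.Adj]

local notation "HJ" => SimpleGraph.join Gᶜ (⊤ : SimpleGraph W)

lemma join_adj_ll (i j : V) : (HJ).Adj (Sum.inl i) (Sum.inl j) ↔ Gᶜ.Adj i j := Iff.rfl
lemma join_adj_lr (i : V) (k : W) : (HJ).Adj (Sum.inl i) (Sum.inr k) := trivial
lemma join_adj_rl (k : W) (i : V) : (HJ).Adj (Sum.inr k) (Sum.inl i) := trivial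
lemma join_adj_rr (k l : W) : (HJ).Adj (Sum.inr k) (Sum.inr l) ↔ k ≠ l := by
  constructor
  · intro h; exact (⊤ : SimpleGraph W).ne_of_adj h
  · intro h; exact h

instance joinDecRel {V' W' : Type*} (G' : SimpleGraph V') (H' : SimpleGraph W')
    [DecidableRel G'.Adj] [DecidableRel H'.Adj] : DecidableRel (G'.join H').Adj := fun a b =>
  match a, b with
  | Sum.inl u, Sum.inl v => (inferInstance : Decidable (G'.Adj u v))
  | Sum.inr u, Sum.inr v => (inferInstance : Decidable (H'.Adj u v))
  | Sum.inl _, Sum.inr _ => Decidable.isTrue trivial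
  | Sum.inr _, Sum.inl _ => Decidable.isTrue trivial

lemma lap_join_mulVec_inl (x : V ⊕ W → ℝ) (i : V) :
    ((HJ).lapMatrix ℝ *ᵥ x) (Sum.inl i) =
      (∑ j, if Gᶜ.Adj i j then x (Sum.inl i) - x (Sum.inl j) else 0) +
      (∑ k : W, (x (Sum.inl i) - x (Sum.inr k))) := by
  rw [lap_mulVec, Fintype.sum_sum_type]
  congr 1

lemma lap_join_mulVec_inr (x : V ⊕ W → ℝ) (k : W) :
    ((HJ).lapMatrix ℝ *ᵥ x) (Sum.inr k) =
      (∑ j : V, (x (Sum.inr k) - x (Sum.inl j))) +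
      (∑ l, if k ≠ l then x (Sum.inr k) - x (Sum.inr l) else 0) := by
  rw [lap_mulVec, Fintype.sum_sum_type]
  congr 1

lemma compl_if_sum (w : V → ℝ) (i : V) :
    (∑ j, if Gᶜ.Adj i j then w i - w j else 0) =
      (Fintype.card V : ℝ) * w i - (∑ j, w j) - (G.lapMatrix ℝ *ᵥ w) i := by
  rw [lap_mulVec]
  have : ∀ j, (if Gᶜ.Adj i j then w i - w j else 0) =
      (w i - w j) - (if G.Adj i j then w i - w j else 0) := by
    intro j
    by_cases hij : i = j
    · subst hij; simp [G.irrefl]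
    · by_cases ha : G.Adj i j
      · rw [if_neg (by simp [compl_adj, ha] : ¬ Gᶜ.Adj i j), if_pos ha]; ring
      · rw [if_pos (by simp [compl_adj, hij, ha] : Gᶜ.Adj i j), if_neg ha]; ring
  rw [Finset.sum_congr rfl fun j _ => this j, Finset.sum_sub_distrib, Finset.sum_sub_distrib]
  simp [Finset.card_univ, mul_comm]

lemma join_eigen1 (w : V → ℝ) (a : ℝ) (ha : a ≠ 0) (hw : G.lapMatrix ℝ *ᵥ w = a • w) :
    (HJ).lapMatrix ℝ *ᵥ (Sum.elim w 0) =
      ((Fintype.card V : ℝ) + (Fintype.card W : ℝ) - a) • Sum.elim w 0 := by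
  have hsum : ∑ j, w j = 0 := by
    have h1 := sum_lap_mulVec G w
    rw [hw] at h1
    simp only [Pi.smul_apply, smul_eq_mul, ← Finset.mul_sum] at h1
    exact (mul_eq_zero.mp h1).resolve_left ha
  funext s
  rcases s with i | k
  · rw [lap_join_mulVec_inl]
    simp only [Sum.elim_inl, Sum.elim_inr, Pi.zero_apply, Pi.smul_apply, smul_eq_mul]
    rw [compl_if_sum, hw, hsum]
    simp only [Pi.smul_apply, smul_eq_mul, Finset.sum_const, Finset.card_univ, sub_zero,
      nsmul_eq_mul]
    ring
  · rw [lap_join_mulVec_inr]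
    simp only [Sum.elim_inl, Sum.elim_inr, Pi.zero_apply, Pi.smul_apply, smul_eq_mul]
    have : ∀ l : W, (if k ≠ l then (0:ℝ) - 0 else 0) = 0 := by intro l; split_ifs <;> ring
    rw [Finset.sum_congr rfl fun l _ => this l]
    simp [hsum, Finset.sum_sub_distrib]

lemma join_eigen2 (c : ℝ) :
    (HJ).lapMatrix ℝ *ᵥ (Sum.elim (fun _ => (Fintype.card W : ℝ) * c)
        (fun _ => -((Fintype.card V : ℝ) * c))) =
      ((Fintype.card V : ℝ) + (Fintype.card W : ℝ)) •
        Sum.elim (fun _ => (Fintype.card W : ℝ) * c) (fun _ => -((Fintype.card V : ℝ) * c)) := by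
  funext s
  rcases s with i | k
  · rw [lap_join_mulVec_inl]
    simp only [Sum.elim_inl, Sum.elim_inr, Pi.smul_apply, smul_eq_mul]
    have : ∀ j, (if Gᶜ.Adj i j then (Fintype.card W : ℝ) * c - (Fintype.card W : ℝ) * c else 0)
        = 0 := by intro j; split_ifs <;> ring
    rw [Finset.sum_congr rfl fun j _ => this j]
    simp only [Finset.sum_const, Finset.card_univ, nsmul_eq_mul, Finset.sum_const_zero]
    ring
  · rw [lap_join_mulVec_inr]
    simp only [Sum.elim_inl, Sum.elim_inr, Pi.smul_apply, smul_eq_mul]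
    have : ∀ l : W, (if k ≠ l then -((Fintype.card V : ℝ) * c) - -((Fintype.card V : ℝ) * c)
        else 0) = 0 := by intro l; split_ifs <;> ring
    rw [Finset.sum_congr rfl fun l _ => this l]
    simp only [Finset.sum_const, Finset.card_univ, nsmul_eq_mul, Finset.sum_const_zero]
    ring

lemma join_eigen3 :
    (HJ).lapMatrix ℝ *ᵥ (fun _ => (1:ℝ)) = (0:ℝ) • (fun _ : V ⊕ W => (1:ℝ)) := by
  rw [lapMatrix_mulVec_const_eq_zero]
  simp

lemma join_eigen4 (g : W → ℝ) (hg : ∑ l, g l = 0) :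
    (HJ).lapMatrix ℝ *ᵥ (Sum.elim (0 : V → ℝ) g) =
      ((Fintype.card V : ℝ) + (Fintype.card W : ℝ)) • Sum.elim (0 : V → ℝ) g := by
  funext s
  rcases s with i | k
  · rw [lap_join_mulVec_inl]
    simp only [Sum.elim_inl, Sum.elim_inr, Pi.zero_apply, Pi.smul_apply, smul_eq_mul]
    have : ∀ j, (if Gᶜ.Adj i j then (0:ℝ) - 0 else 0) = 0 := by intro j; split_ifs <;> ring
    rw [Finset.sum_congr rfl fun j _ => this j]
    simp [hg, Finset.sum_sub_distrib]
  · rw [lap_join_mulVec_inr]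
    simp only [Sum.elim_inl, Sum.elim_inr, Pi.zero_apply, Pi.smul_apply, smul_eq_mul]
    have : ∀ l : W, (if k ≠ l then g k - g l else 0) = g k - g l := by
      intro l
      by_cases h : k = l
      · subst h; simp
      · rw [if_pos h]
    rw [Finset.sum_congr rfl fun l _ => this l]
    simp only [Finset.sum_sub_distrib, Finset.sum_const, Finset.card_univ, nsmul_eq_mul, hg,
      sub_zero]
    ring

end Stage4

section Stage5
open SimpleGraph Matrix Finset

variable {V : Type*} [Fintype V] [DecidableEq V]

lemma mul_diag_of_cols (A P : Matrix V V ℝ) (d : V → ℝ)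
    (h : ∀ j, A *ᵥ (fun i => P i j) = d j • (fun i => P i j)) : A * P = P * diagonal d := by
  ext i j
  have := congrFun (h j) i
  simp only [mulVec, dotProduct, Pi.smul_apply, smul_eq_mul] at this
  rw [Matrix.mul_apply, Matrix.mul_diagonal]
  rw [this]; ring

lemma cols_of_mul_diag {A P : Matrix V V ℝ} {d : V → ℝ}
    (h : A * P = P * diagonal d) (j : V) :
    A *ᵥ (fun i => P i j) = d j • (fun i => P i j) := by
  funext i
  have := congrFun (congrFun h i) j
  rw [Matrix.mul_apply, Matrix.mul_diagonal] at this
  simp only [mulVec, dotProduct, Pi.smul_apply, smul_eq_mul]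
  rw [this]; ring

lemma isUnit_det_of_ker (P : Matrix V V ℝ) (h : ∀ x, P *ᵥ x = 0 → x = 0) : IsUnit P.det := by
  rw [isUnit_iff_ne_zero]
  intro hdet
  obtain ⟨v, hv, hv0⟩ := (Matrix.exists_mulVec_eq_zero_iff).mpr hdet
  exact hv (h v hv0)

lemma mulVec_eq_zero_of_isUnit {P : Matrix V V ℝ} (hP : IsUnit P.det) {y : V → ℝ}
    (h : P *ᵥ y = 0) : y = 0 := by
  have : P⁻¹ *ᵥ (P *ᵥ y) = y := by
    rw [mulVec_mulVec, Matrix.nonsing_inv_mul _ hP, one_mulVec]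
  rw [h, mulVec_zero] at this
  exact this.symm

lemma edgeCount_eq (G : SimpleGraph V) [DecidableRel G.Adj] :
    edgeCount G = G.edgeFinset.card := by
  rw [edgeCount, Set.ncard_eq_toFinset_card']
  congr 1

lemma trace_lap (G : SimpleGraph V) [DecidableRel G.Adj] :
    (G.lapMatrix ℝ).trace = 2 * (edgeCount G : ℝ) := by
  have h1 : (G.lapMatrix ℝ).trace = ∑ i, (G.degree i : ℝ) := by
    rw [Matrix.trace]
    refine Finset.sum_congr rfl fun i _ => ?_
    simp [Matrix.diag, lapMatrix, degMatrix, adjMatrix_apply]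
  rw [h1, edgeCount_eq]
  rw [← Nat.cast_sum]
  rw [SimpleGraph.sum_degrees_eq_twice_card_edges]
  push_cast
  ring

end Stage5

section Stage5b
open SimpleGraph Matrix Finset

lemma Fsum_eval (p : ℕ) (hp : 0 < p) (xr : Fin p → ℝ) (l : Fin p) :
    (∑ k : Fin p, (if k.val = 0 then (1:ℝ)
        else ((if l = k then (1:ℝ) else 0) - (if l.val = 0 then 1 else 0))) * xr k)
    = xr ⟨0, hp⟩ + (if l = ⟨0, hp⟩
        then - (∑ k ∈ Finset.univ.erase (⟨0, hp⟩ : Fin p), xr k) else xr l) := by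
  rw [← Finset.add_sum_erase _ _ (Finset.mem_univ (⟨0, hp⟩ : Fin p))]
  congr 1
  · simp
  · by_cases hl : l = ⟨0, hp⟩
    · rw [if_pos hl]
      rw [← Finset.sum_neg_distrib]
      refine Finset.sum_congr rfl fun k hk => ?_
      have hk0 : k.val ≠ 0 := by
        have := (Finset.mem_erase.mp hk).1
        simpa [Fin.ext_iff] using this
      have hlk : l ≠ k := by rw [hl]; intro h; exact hk0 (by simp [← h])
      rw [if_neg hk0, if_neg hlk, if_pos (by rw [hl])]
      ring
    · rw [if_neg hl]
      have hlv : l.val ≠ 0 := by simpa [Fin.ext_iff] using hl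
      rw [Finset.sum_eq_single_of_mem l (Finset.mem_erase.mpr ⟨hl, Finset.mem_univ l⟩)]
      · rw [if_neg hlv, if_pos rfl, if_neg hlv]; ring
      · intro b hb hbl
        have hb0 : b.val ≠ 0 := by
          have := (Finset.mem_erase.mp hb).1
          simpa [Fin.ext_iff] using this
        rw [if_neg hb0, if_neg (fun h => hbl h.symm), if_neg hlv]
        ring

lemma Fker (p : ℕ) (hp : 0 < p) (xr : Fin p → ℝ) (A : ℝ)
    (hl : ∀ l : Fin p, A + ∑ k : Fin p, (if k.val = 0 then (1:ℝ)
        else ((if l = k then (1:ℝ) else 0) - (if l.val = 0 then 1 else 0))) * xr k = 0) :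
    (∀ l : Fin p, l ≠ ⟨0, hp⟩ → xr l = 0) ∧ A + xr ⟨0, hp⟩ = 0 := by
  have hl' : ∀ l : Fin p, l ≠ ⟨0, hp⟩ → xr l = -(A + xr ⟨0, hp⟩) := by
    intro l hlne
    have := hl l
    rw [Fsum_eval p hp xr l, if_neg hlne] at this
    linarith
  have hkey : A + xr ⟨0, hp⟩ = 0 := by
    have h0 := hl ⟨0, hp⟩
    rw [Fsum_eval p hp xr ⟨0, hp⟩, if_pos rfl] at h0
    have hsum : ∑ k ∈ Finset.univ.erase (⟨0, hp⟩ : Fin p), xr k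
        = ((p : ℝ) - 1) * (-(A + xr ⟨0, hp⟩)) := by
      rw [Finset.sum_congr rfl (fun k hk => hl' k (Finset.mem_erase.mp hk).1)]
      rw [Finset.sum_const, Finset.card_erase_of_mem (Finset.mem_univ _), Finset.card_univ,
        Fintype.card_fin, nsmul_eq_mul]
      congr 1
      rw [Nat.cast_sub (by omega : 1 ≤ p)]
      norm_num
    rw [hsum] at h0
    have hppos : (0:ℝ) < (p:ℝ) := by exact_mod_cast hp
    have : (p:ℝ) * (A + xr ⟨0, hp⟩) = 0 := by linarith
    have := mul_eq_zero.mp this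
    rcases this with h | h
    · exact absurd h (ne_of_gt hppos)
    · exact h
  exact ⟨fun l hlne => by rw [hl' l hlne, hkey, neg_zero], hkey⟩

end Stage5b

noncomputable def RHSval (n m p : ℕ) : ℝ :=
  (∑ k : Fin p, |((n:ℝ) + p) + (if k.val = 0 then (0:ℝ) else (p:ℝ))
      - ((n:ℝ) + 2*p - 2 - 2*(m:ℝ)/((n:ℝ) + p))|)
  + ((p:ℝ) * (2*(m:ℝ)) + ((n:ℝ)-1) * (∑ k : Fin p, (((n:ℝ) + 2*p - 2 - 2*(m:ℝ)/((n:ℝ) + p))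
      - ((n:ℝ) + p) - (if k.val = 0 then (0:ℝ) else (p:ℝ)))))
  + (∑ j : Fin p, ∑ k : Fin p, |(if j.val = 0 then (0:ℝ) else ((n:ℝ) + p))
      + (if k.val = 0 then (0:ℝ) else (p:ℝ)) - ((n:ℝ) + 2*p - 2 - 2*(m:ℝ)/((n:ℝ) + p))|)

section Master
open SimpleGraph Matrix Finset

theorem master (n m p : ℕ) (hn : 2 ≤ n) (hp : 0 < p) (G : SimpleGraph (Fin n))
    [DecidableRel G.Adj]
    (hc : G.Connected) (hm : edgeCount G = m) (μ : Fin n → ℝ) (hμmono : Antitone μ)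
    (hμspec : lapSpec G = Finset.univ.val.map μ)
    (hμlast : μ ⟨n - 1, by omega⟩ = 0) (hμpos : 2 < μ ⟨n - 2, by omega⟩)
    (hcond : 2 * (m : ℝ) / ((p : ℝ) + (n : ℝ)) < μ ⟨n - 2, by omega⟩ - 2) :
    lapEnergy ((SimpleGraph.join Gᶜ (⊤ : SimpleGraph (Fin p))) □ (⊤ : SimpleGraph (Fin p)))
      = RHSval n m p := by
  classical
  set L := G.lapMatrix ℝ with hLdef
  have hL : L.IsHermitian := (G.posSemidef_lapMatrix ℝ).1
  obtain ⟨hLW, hWdet⟩ := charpoly_eigen L hL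
  set Wm : Matrix (Fin n) (Fin n) ℝ := (hL.eigenvectorUnitary : Matrix (Fin n) (Fin n) ℝ)
    with hWmdef
  set e : Fin n → ℝ := hL.eigenvalues with hedef
  have hspec : lapSpec G = Finset.univ.val.map e := lapSpec_eq_of G Wm hWdet e hLW
  have hee : Finset.univ.val.map e = Finset.univ.val.map μ := by rw [← hspec, hμspec]
  have htransfer : ∀ h : ℝ → ℝ, ∑ j, h (e j) = ∑ i, h (μ i) := by
    intro h
    have := congrArg (fun s => (s.map h).sum) hee
    simpa [Multiset.map_map, Finset.sum, Function.comp_def] using this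
  have hNpos : (0:ℝ) < (n:ℝ) + p := by positivity
  have hppos : (0:ℝ) < (p:ℝ) := by exact_mod_cast hp
  have hsum_mu : ∑ i, μ i = 2*(m:ℝ) := by
    have h1 : L.trace = ∑ j, e j := trace_eq_of L Wm hWdet e hLW
    have h2 : L.trace = 2 * (edgeCount G : ℝ) := trace_lap G
    have h3 : ∑ j, (fun x => x) (e j) = ∑ i, (fun x => x) (μ i) := htransfer (fun x => x)
    simp only at h3
    rw [← h3, ← h1, h2, hm]
  -- unique zero of μ
  have hlast : μ ⟨n - 1, by omega⟩ = 0 := hμlast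
  have hμzero_iff : ∀ i : Fin n, μ i = 0 ↔ i = ⟨n - 1, by omega⟩ := by
    intro i
    constructor
    · intro h0
      by_contra hne
      have hival : i.val ≤ n - 2 := by
        have h1 : i.val < n := i.isLt
        have h2 : i.val ≠ n - 1 := fun h => hne (Fin.ext h)
        omega
      have hle : i ≤ (⟨n - 2, by omega⟩ : Fin n) := by
        rw [Fin.le_def]
        exact hival
      have := hμmono hle
      rw [h0] at this
      linarith
    · rintro rfl; exact hμlast
  -- unique zero of e
  obtain ⟨j₀, hj₀, huniq⟩ : ∃ j₀, e j₀ = 0 ∧ ∀ j, e j = 0 → j = j₀ := by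
    have hfilμ : Finset.univ.filter (fun a : Fin n => (0:ℝ) = μ a) = {⟨n - 1, by omega⟩} := by
      ext a
      simp only [Finset.mem_filter, Finset.mem_univ, true_and, Finset.mem_singleton]
      rw [eq_comm]
      exact hμzero_iff a
    have hcntμ : (Finset.univ.val.map μ).count 0 = 1 := by
      rw [Multiset.count_map]
      rw [← Finset.filter_val, hfilμ]
      rfl
    have hcnte : (Finset.univ.val.map e).count 0 = 1 := by rw [hee]; exact hcntμ
    rw [Multiset.count_map, ← Finset.filter_val] at hcnte
    have hcard : (Finset.univ.filter (fun a : Fin n => (0:ℝ) = e a)).card = 1 := hcnte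
    obtain ⟨j₀, hj₀s⟩ := Finset.card_eq_one.mp hcard
    refine ⟨j₀, ?_, ?_⟩
    · have : j₀ ∈ Finset.univ.filter (fun a : Fin n => (0:ℝ) = e a) := by
        rw [hj₀s]; exact Finset.mem_singleton_self j₀
      exact ((Finset.mem_filter.mp this).2).symm
    · intro j hj
      have : j ∈ Finset.univ.filter (fun a : Fin n => (0:ℝ) = e a) := by
        simp [hj.symm]
      rw [hj₀s] at this
      exact Finset.mem_singleton.mp this
  have hcol : ∀ j, L *ᵥ (fun i => Wm i j) = e j • (fun i => Wm i j) := fun j =>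
    cols_of_mul_diag hLW j
  have hker : L *ᵥ (fun i => Wm i j₀) = 0 := by rw [hcol j₀, hj₀, zero_smul]
  have hconst : ∀ i, Wm i j₀ = Wm (⟨0, by omega⟩ : Fin n) j₀ := by
    have := (lapMatrix_mulVec_eq_zero_iff_forall_reachable G).mp hker
    intro i
    exact this i _ (hc.preconnected i _)
  set c : ℝ := Wm (⟨0, by omega⟩ : Fin n) j₀ with hcdef
  have hc0 : c ≠ 0 := by
    intro h0
    have hz : ∀ i, Wm i j₀ = 0 := fun i => (hconst i).trans h0
    exact (isUnit_iff_ne_zero.mp hWdet) (Matrix.det_eq_zero_of_column_eq_zero j₀ hz)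
  set N : ℝ := (n:ℝ) + p with hNdef
  set bvals : Fin p → ℝ := fun k => if k.val = 0 then 0 else (p:ℝ) with hbdef
  set avals : (Fin n ⊕ Fin p) → ℝ :=
    Sum.elim (fun j => N - e j) (fun k => if k.val = 0 then 0 else N) with hadef
  set Fcol : Fin p → (Fin p → ℝ) := fun k =>
    if k.val = 0 then (fun _ => 1)
    else (fun l => (if l = k then 1 else 0) - (if l.val = 0 then 1 else 0)) with hFcdef
  set Ucol : (Fin n ⊕ Fin p) → ((Fin n ⊕ Fin p) → ℝ) :=
    Sum.elim
      (fun j => if e j = 0 then Sum.elim (fun _ => (p:ℝ) * c) (fun _ => -((n:ℝ) * c))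
        else Sum.elim (fun i => Wm i j) 0)
      (fun k => if k.val = 0 then (fun _ => 1)
        else Sum.elim (0 : Fin n → ℝ)
          (fun l => (if l = k then 1 else 0) - (if l.val = 0 then 1 else 0))) with hUcdef
  have hsumind : ∀ k : Fin p, k.val ≠ 0 →
      ∑ l : Fin p, ((if l = k then (1:ℝ) else 0) - (if l.val = 0 then 1 else 0)) = 0 := by
    intro k hk
    rw [Finset.sum_sub_distrib]
    have h1 : ∑ l : Fin p, (if l = k then (1:ℝ) else 0) = 1 := by
      rw [Finset.sum_ite_eq' Finset.univ k (fun _ => (1:ℝ))]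
      simp
    have h2 : ∑ l : Fin p, (if l.val = 0 then (1:ℝ) else 0) = 1 := by
      have : ∀ l : Fin p, (if l.val = 0 then (1:ℝ) else 0) = if l = ⟨0, hp⟩ then 1 else 0 := by
        intro l
        congr 1
        simp [Fin.ext_iff]
      rw [Finset.sum_congr rfl fun l _ => this l]
      rw [Finset.sum_ite_eq' Finset.univ (⟨0, hp⟩ : Fin p) (fun _ => (1:ℝ))]
      simp
    rw [h1, h2, sub_self]
  have hF : ∀ k, (⊤ : SimpleGraph (Fin p)).lapMatrix ℝ *ᵥ Fcol k = bvals k • Fcol k := by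
    intro k
    by_cases hk : k.val = 0
    · funext l
      rw [hFcdef]
      simp only [if_pos hk]
      rw [lap_top_mulVec (fun _ => (1:ℝ)) l]
      simp [hbdef, hk, Fintype.card_fin]
    · funext l
      rw [hFcdef]
      simp only [if_neg hk]
      rw [lap_top_mulVec]
      rw [hsumind k hk]
      simp only [hbdef, if_neg hk, Fintype.card_fin, Pi.smul_apply, smul_eq_mul, sub_zero]
  have hU : ∀ j, ((SimpleGraph.join Gᶜ (⊤ : SimpleGraph (Fin p))).lapMatrix ℝ) *ᵥ Ucol j
      = avals j • Ucol j := by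
    rintro (j | k)
    · by_cases hj : e j = 0
      · have hUc : Ucol (Sum.inl j) =
            Sum.elim (fun _ => (Fintype.card (Fin p) : ℝ) * c)
              (fun _ => -((Fintype.card (Fin n) : ℝ) * c)) := by
          rw [hUcdef]
          simp only [Sum.elim_inl, if_pos hj, Fintype.card_fin]
        rw [hUc]
        rw [join_eigen2 G c]
        have hav : avals (Sum.inl j) = (Fintype.card (Fin n) : ℝ) + (Fintype.card (Fin p) : ℝ) := by
          rw [hadef]
          simp [hj, hNdef, Fintype.card_fin]
        rw [hav]
      · have hUc : Ucol (Sum.inl j) = Sum.elim (fun i => Wm i j) 0 := by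
          rw [hUcdef]; simp only [Sum.elim_inl, if_neg hj]
        have hav : avals (Sum.inl j) = (Fintype.card (Fin n) : ℝ) + (Fintype.card (Fin p) : ℝ)
            - e j := by
          rw [hadef]; simp [hNdef, Fintype.card_fin]
        rw [hUc, hav]
        exact join_eigen1 G (fun i => Wm i j) (e j) hj (hcol j)
    · by_cases hk : k.val = 0
      · have hUc : Ucol (Sum.inr k) = fun _ => (1:ℝ) := by
          rw [hUcdef]; simp only [Sum.elim_inr, if_pos hk]
        have hav : avals (Sum.inr k) = 0 := by rw [hadef]; simp [hk]
        rw [hUc, hav]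
        exact join_eigen3 G
      · have hUc : Ucol (Sum.inr k) = Sum.elim (0 : Fin n → ℝ)
            (fun l => (if l = k then 1 else 0) - (if l.val = 0 then 1 else 0)) := by
          rw [hUcdef]; simp only [Sum.elim_inr, if_neg hk]
        have hav : avals (Sum.inr k) = (Fintype.card (Fin n) : ℝ) + (Fintype.card (Fin p) : ℝ) := by
          rw [hadef]; simp [hk, hNdef, Fintype.card_fin]
        rw [hUc, hav]
        exact join_eigen4 G _ (hsumind k hk)
  set B := (SimpleGraph.join Gᶜ (⊤ : SimpleGraph (Fin p))) □ (⊤ : SimpleGraph (Fin p)) with hBdef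
  set Zm : Matrix ((Fin n ⊕ Fin p) × Fin p) ((Fin n ⊕ Fin p) × Fin p) ℝ :=
    fun x y => Ucol y.1 x.1 * Fcol y.2 x.2 with hZmdef
  set dBig : (Fin n ⊕ Fin p) × Fin p → ℝ := fun y => avals y.1 + bvals y.2 with hdBdef
  have hZ : B.lapMatrix ℝ * Zm = Zm * diagonal dBig := by
    apply mul_diag_of_cols
    intro y
    funext z
    have hcolz : (fun i => Zm i y) = (fun x : (Fin n ⊕ Fin p) × Fin p =>
        Ucol y.1 x.1 * Fcol y.2 x.2) := rfl
    rw [hcolz]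
    rw [lap_box_mulVec (SimpleGraph.join Gᶜ (⊤ : SimpleGraph (Fin p)))
      (⊤ : SimpleGraph (Fin p)) (Ucol y.1) (Fcol y.2) z]
    rw [hU y.1, hF y.2]
    simp only [Pi.smul_apply, smul_eq_mul, hdBdef]
    ring
  have hUF : ∀ (k : Fin p) (l : Fin p), Ucol (Sum.inr k) (Sum.inr l)
      = (if k.val = 0 then (1:ℝ)
        else ((if l = k then (1:ℝ) else 0) - (if l.val = 0 then 1 else 0))) := by
    intro k l
    rw [hUcdef]
    by_cases hk : k.val = 0 <;> simp [hk]
  have hUdet : IsUnit (Matrix.det (fun i j => Ucol j i : Matrix (Fin n ⊕ Fin p) _ ℝ)) := by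
    apply isUnit_det_of_ker
    intro x hx
    have hline : ∀ s, ∑ j, Ucol j s * x j = 0 := by
      intro s
      have := congrFun hx s
      simpa [Matrix.mulVec, dotProduct] using this
    have k0 : Fin p := ⟨0, hp⟩
    -- top equations
    have htop : ∀ i : Fin n,
        (∑ j : Fin n, Ucol (Sum.inl j) (Sum.inl i) * x (Sum.inl j)) + x (Sum.inr ⟨0, hp⟩) = 0 := by
      intro i
      have h := hline (Sum.inl i)
      rw [Fintype.sum_sum_type] at h
      have h2 : ∑ k : Fin p, Ucol (Sum.inr k) (Sum.inl i) * x (Sum.inr k)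
          = x (Sum.inr ⟨0, hp⟩) := by
        rw [← Finset.add_sum_erase _ _ (Finset.mem_univ (⟨0, hp⟩ : Fin p))]
        have ha : Ucol (Sum.inr ⟨0, hp⟩) (Sum.inl i) = 1 := by rw [hUcdef]; simp
        have hb : ∑ k ∈ Finset.univ.erase (⟨0, hp⟩ : Fin p),
            Ucol (Sum.inr k) (Sum.inl i) * x (Sum.inr k) = 0 := by
          apply Finset.sum_eq_zero
          intro k hk
          have hk0 : k.val ≠ 0 := by
            have := (Finset.mem_erase.mp hk).1
            simpa [Fin.ext_iff] using this
          rw [hUcdef]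
          simp [hk0]
        rw [ha, hb, one_mul, add_zero]
      rw [h2] at h
      exact h
    set y : Fin n → ℝ := fun j => if e j = 0
        then (p:ℝ) * x (Sum.inl j) + c⁻¹ * x (Sum.inr ⟨0, hp⟩)
        else x (Sum.inl j) with hydef
    have hWy : Wm *ᵥ y = 0 := by
      funext i
      have hterm : ∀ j, Wm i j * y j = Ucol (Sum.inl j) (Sum.inl i) * x (Sum.inl j)
          + (if e j = 0 then Wm i j * (c⁻¹ * x (Sum.inr ⟨0, hp⟩)) else 0) := by
        intro j
        by_cases hj : e j = 0
        · have hjj : j = j₀ := huniq j hj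
          subst hjj
          rw [hydef]
          simp only [if_pos hj]
          rw [hUcdef]
          simp only [Sum.elim_inl, if_pos hj]
          rw [hconst i]
          field_simp
        · rw [hydef]
          simp only [if_neg hj]
          rw [hUcdef]
          simp only [Sum.elim_inl, if_neg hj]
          ring
      have hmv : (Wm *ᵥ y) i = ∑ j, Wm i j * y j := by
        simp [Matrix.mulVec, dotProduct]
      rw [hmv, Finset.sum_congr rfl fun j _ => hterm j, Finset.sum_add_distrib]
      have hsec : ∑ j, (if e j = 0 then Wm i j * (c⁻¹ * x (Sum.inr ⟨0, hp⟩)) else 0)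
          = x (Sum.inr ⟨0, hp⟩) := by
        rw [Finset.sum_eq_single_of_mem j₀ (Finset.mem_univ j₀)]
        · rw [if_pos hj₀, hconst i]
          field_simp
        · intro b _ hb
          exact if_neg (fun h => hb (huniq b h))
      rw [hsec]
      have := htop i
      simp only [Pi.zero_apply]
      linarith
    have hy0 : y = 0 := mulVec_eq_zero_of_isUnit hWdet hWy
    have hxj : ∀ j, e j ≠ 0 → x (Sum.inl j) = 0 := by
      intro j hj
      have := congrFun hy0 j
      rw [hydef] at this
      simpa [hj] using this
    have hj0eq : (p:ℝ) * x (Sum.inl j₀) + c⁻¹ * x (Sum.inr ⟨0, hp⟩) = 0 := by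
      have := congrFun hy0 j₀
      rw [hydef] at this
      simpa [hj₀] using this
    -- bottom equations
    have hbot : ∀ l : Fin p, -((n:ℝ) * c) * x (Sum.inl j₀)
        + ∑ k : Fin p, (if k.val = 0 then (1:ℝ)
            else ((if l = k then (1:ℝ) else 0) - (if l.val = 0 then 1 else 0)))
            * x (Sum.inr k) = 0 := by
      intro l
      have h := hline (Sum.inr l)
      rw [Fintype.sum_sum_type] at h
      have h1 : ∑ j : Fin n, Ucol (Sum.inl j) (Sum.inr l) * x (Sum.inl j)
          = -((n:ℝ) * c) * x (Sum.inl j₀) := by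
        rw [Finset.sum_eq_single_of_mem j₀ (Finset.mem_univ j₀)]
        · rw [hUcdef]
          simp only [Sum.elim_inl, if_pos hj₀, Sum.elim_inr]
        · intro b _ hb
          have hbe : e b ≠ 0 := fun hh => hb (huniq b hh)
          rw [hUcdef]
          simp [hbe]
      have h2 : ∀ k : Fin p, Ucol (Sum.inr k) (Sum.inr l) * x (Sum.inr k)
          = (if k.val = 0 then (1:ℝ)
            else ((if l = k then (1:ℝ) else 0) - (if l.val = 0 then 1 else 0)))
            * x (Sum.inr k) := fun k => by rw [hUF k l]
      rw [h1, Finset.sum_congr rfl fun k _ => h2 k] at h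
      exact h
    obtain ⟨hrest, hA⟩ := Fker p hp (fun k => x (Sum.inr k)) (-((n:ℝ) * c) * x (Sum.inl j₀)) hbot
    -- conclude
    have hxj₀ : x (Sum.inl j₀) = 0 := by
      have hxr0 : x (Sum.inr ⟨0, hp⟩) = (n:ℝ) * c * x (Sum.inl j₀) := by linarith
      rw [hxr0] at hj0eq
      have : ((p:ℝ) + n) * x (Sum.inl j₀) = 0 := by
        have hcc : c⁻¹ * ((n:ℝ) * c * x (Sum.inl j₀)) = (n:ℝ) * x (Sum.inl j₀) := by
          field_simp
        rw [hcc] at hj0eq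
        linarith
      have hnp : ((p:ℝ) + n) ≠ 0 := by positivity
      exact (mul_eq_zero.mp this).resolve_left hnp
    have hxr00 : x (Sum.inr ⟨0, hp⟩) = 0 := by
      rw [hxj₀] at hA
      simpa using hA
    funext s
    rcases s with j | k
    · by_cases hj : e j = 0
      · rw [huniq j hj]
        exact hxj₀
      · exact hxj j hj
    · by_cases hk : k = ⟨0, hp⟩
      · rw [hk]; exact hxr00
      · exact hrest k hk
  have hFdet : IsUnit (Matrix.det (fun l k => Fcol k l : Matrix (Fin p) (Fin p) ℝ)) := by
    apply isUnit_det_of_ker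
    intro x hx
    have hFentry : ∀ k l : Fin p, Fcol k l = (if k.val = 0 then (1:ℝ)
        else ((if l = k then (1:ℝ) else 0) - (if l.val = 0 then 1 else 0))) := by
      intro k l
      rw [hFcdef]
      by_cases hk : k.val = 0 <;> simp [hk]
    have hline : ∀ l : Fin p, (0:ℝ) + ∑ k : Fin p, (if k.val = 0 then (1:ℝ)
        else ((if l = k then (1:ℝ) else 0) - (if l.val = 0 then 1 else 0))) * x k = 0 := by
      intro l
      have h0 : ∑ k : Fin p, Fcol k l * x k = 0 := by
        have := congrFun hx l
        simpa [Matrix.mulVec, dotProduct] using this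
      rw [zero_add]
      rw [show (∑ k : Fin p, (if k.val = 0 then (1:ℝ)
        else ((if l = k then (1:ℝ) else 0) - (if l.val = 0 then 1 else 0))) * x k)
          = ∑ k : Fin p, Fcol k l * x k from
        Finset.sum_congr rfl (fun k _ => by rw [hFentry k l])]
      exact h0
    obtain ⟨hrest, hA⟩ := Fker p hp x 0 hline
    funext k
    by_cases hk : k = ⟨0, hp⟩
    · rw [hk]
      simpa using hA
    · exact hrest k hk
  have hZdet : IsUnit Zm.det := by
    have hZk : Zm = Matrix.kroneckerMap (· * ·) (fun i j => Ucol j i : Matrix (Fin n ⊕ Fin p) _ ℝ)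
        (fun l k => Fcol k l : Matrix (Fin p) (Fin p) ℝ) := rfl
    have hdk := Matrix.det_kronecker (fun i j => Ucol j i : Matrix (Fin n ⊕ Fin p) (Fin n ⊕ Fin p) ℝ)
      (fun l k => Fcol k l : Matrix (Fin p) (Fin p) ℝ)
    rw [hZk, hdk]
    exact (hUdet.pow _).mul (hFdet.pow _)
  have hspecB : lapSpec B = Finset.univ.val.map dBig := lapSpec_eq_of B Zm hZdet dBig hZ
  have h2eB : 2 * (edgeCount B : ℝ) = ∑ y, dBig y := by
    rw [← trace_lap B]
    exact trace_eq_of _ Zm hZdet dBig hZ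
  -- final arithmetic
  have hse : ∑ j, e j = 2*(m:ℝ) := by
    have h := htransfer (fun x => x)
    rw [h, hsum_mu]
  set ctr : ℝ := (n:ℝ) + 2*p - 2 - 2*(m:ℝ)/N with hctrdef
  have hcard : (Fintype.card ((Fin n ⊕ Fin p) × Fin p) : ℝ) = ((n:ℝ) + p) * p := by
    simp only [Fintype.card_prod, Fintype.card_sum, Fintype.card_fin]
    push_cast
    ring
  have hsumb : ∑ k, bvals k = ((p:ℝ) - 1) * p := by
    have hpt : ∀ k : Fin p, bvals k = (p:ℝ) - (if k = ⟨0, hp⟩ then (p:ℝ) else 0) := by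
      intro k
      by_cases hk : k = ⟨0, hp⟩
      · rw [hbdef]; simp [hk]
      · have hkv : k.val ≠ 0 := by simpa [Fin.ext_iff] using hk
        rw [hbdef]; simp [hkv, hk]
    rw [Finset.sum_congr rfl fun k _ => hpt k, Finset.sum_sub_distrib, Finset.sum_const,
      Finset.sum_ite_eq' Finset.univ (⟨0, hp⟩ : Fin p) (fun _ => (p:ℝ))]
    simp only [Finset.card_univ, Fintype.card_fin, nsmul_eq_mul, Finset.mem_univ, if_pos]
    ring
  have hsuma2 : ∑ k : Fin p, (if (k : Fin p).val = 0 then (0:ℝ) else N) = ((p:ℝ) - 1) * N := by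
    have hpt : ∀ k : Fin p, (if (k : Fin p).val = 0 then (0:ℝ) else N)
        = N - (if k = ⟨0, hp⟩ then N else 0) := by
      intro k
      by_cases hk : k = ⟨0, hp⟩
      · simp [hk]
      · have hkv : k.val ≠ 0 := by simpa [Fin.ext_iff] using hk
        simp [hkv, hk]
    rw [Finset.sum_congr rfl fun k _ => hpt k, Finset.sum_sub_distrib, Finset.sum_const,
      Finset.sum_ite_eq' Finset.univ (⟨0, hp⟩ : Fin p) (fun _ => N)]
    simp only [Finset.card_univ, Fintype.card_fin, nsmul_eq_mul, Finset.mem_univ, if_pos]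
    ring
  have hsuma : ∑ j : Fin n ⊕ Fin p, avals j = ((n:ℝ)*N - 2*m) + ((p:ℝ)-1)*N := by
    rw [Fintype.sum_sum_type]
    have h1 : ∑ j : Fin n, avals (Sum.inl j) = (n:ℝ)*N - 2*m := by
      rw [hadef]
      simp only [Sum.elim_inl]
      rw [Finset.sum_sub_distrib, Finset.sum_const, hse]
      simp only [Finset.card_univ, Fintype.card_fin, nsmul_eq_mul]
    have h2 : ∑ k : Fin p, avals (Sum.inr k) = ((p:ℝ)-1)*N := by
      rw [hadef]
      simp only [Sum.elim_inr]
      exact hsuma2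
    rw [h1, h2]
  have hTsum : ∑ y, dBig y = (p:ℝ) * (((n:ℝ)*N - 2*m) + ((p:ℝ)-1)*N)
      + ((n:ℝ)+p) * (((p:ℝ)-1)*p) := by
    rw [hdBdef]
    rw [Fintype.sum_prod_type]
    have hrow : ∀ j, ∑ k, (avals j + bvals k) = (p:ℝ) * avals j + ((p:ℝ)-1)*p := by
      intro j
      rw [Finset.sum_add_distrib, Finset.sum_const, hsumb]
      simp only [Finset.card_univ, Fintype.card_fin, nsmul_eq_mul]
      all_goals ring
    rw [Finset.sum_congr rfl fun j _ => hrow j, Finset.sum_add_distrib, ← Finset.mul_sum,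
      hsuma, Finset.sum_const]
    simp only [Finset.card_univ, Fintype.card_sum, Fintype.card_fin, nsmul_eq_mul]
    push_cast
    ring
  have hctr : 2 * (edgeCount B : ℝ) / (Fintype.card ((Fin n ⊕ Fin p) × Fin p) : ℝ) = ctr := by
    rw [h2eB, hTsum, hcard, hctrdef, hNdef]
    have hpne : (p:ℝ) ≠ 0 := ne_of_gt hppos
    have hNne : (n:ℝ) + p ≠ 0 := ne_of_gt hNpos
    field_simp
    ring
  have hE : lapEnergy B = ∑ y : (Fin n ⊕ Fin p) × Fin p, |dBig y - ctr| := by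
    unfold lapEnergy
    rw [hspecB, Multiset.map_map]
    rw [show (Multiset.map ((fun x => |x - 2 * (edgeCount B : ℝ)
        / (Fintype.card ((Fin n ⊕ Fin p) × Fin p) : ℝ)|) ∘ dBig) Finset.univ.val).sum
      = ∑ y : (Fin n ⊕ Fin p) × Fin p, |dBig y - 2 * (edgeCount B : ℝ)
        / (Fintype.card ((Fin n ⊕ Fin p) × Fin p) : ℝ)| from rfl]
    exact Finset.sum_congr rfl fun y _ => by rw [hctr]
  rw [hE]
  rw [Fintype.sum_prod_type, Fintype.sum_sum_type]
  -- first block (Fin n part)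
  have hfirst : ∑ j : Fin n, ∑ k : Fin p, |dBig (Sum.inl j, k) - ctr|
      = ∑ i : Fin n, (fun r => ∑ k : Fin p, |N - r + bvals k - ctr|) (μ i) := by
    rw [← htransfer (fun r => ∑ k : Fin p, |N - r + bvals k - ctr|)]
    refine Finset.sum_congr rfl fun j _ => ?_
    refine Finset.sum_congr rfl fun k _ => ?_
    rw [hdBdef, hadef]
    simp only [Sum.elim_inl]
  rw [hfirst]
  simp only
  have hNswap : 2 * (m:ℝ) / ((p:ℝ) + n) = 2 * (m:ℝ) / N := by rw [hNdef]; ring_nf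
  have hgt : ∀ i : Fin n, i ≠ (⟨n - 1, by omega⟩ : Fin n) → 2 + 2*(m:ℝ)/N < μ i := by
    intro i hi
    have hival : i.val ≤ n - 2 := by
      have h1 : i.val < n := i.isLt
      have h2 : i.val ≠ n - 1 := fun h => hi (Fin.ext h)
      omega
    have hle : i ≤ (⟨n - 2, by omega⟩ : Fin n) := by rw [Fin.le_def]; exact hival
    have := hμmono hle
    rw [hNswap] at hcond
    linarith
  have habs : ∀ i : Fin n, i ≠ (⟨n - 1, by omega⟩ : Fin n) →
      (∑ k : Fin p, |N - μ i + bvals k - ctr|)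
        = (p:ℝ) * μ i + ∑ k : Fin p, (ctr - N - bvals k) := by
    intro i hi
    have hgti := hgt i hi
    have hterm : ∀ k : Fin p, |N - μ i + bvals k - ctr| = μ i + (ctr - N - bvals k) := by
      intro k
      have hble : bvals k ≤ (p:ℝ) := by
        rw [hbdef]
        by_cases hk : (k : Fin p).val = 0 <;> simp [hk]
      have hneg : N - μ i + bvals k - ctr < 0 := by
        rw [hctrdef, hNdef] at *
        linarith
      rw [abs_of_neg hneg]
      ring
    rw [Finset.sum_congr rfl fun k _ => hterm k, Finset.sum_add_distrib, Finset.sum_const]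
    simp only [Finset.card_univ, Fintype.card_fin, nsmul_eq_mul]
    all_goals ring
  have hsplit : ∑ i : Fin n, (∑ k : Fin p, |N - μ i + bvals k - ctr|)
      = (∑ k : Fin p, |N - (0:ℝ) + bvals k - ctr|)
        + ((p:ℝ) * (2*(m:ℝ)) + ((n:ℝ)-1) * (∑ k : Fin p, (ctr - N - bvals k))) := by
    rw [← Finset.add_sum_erase _ _ (Finset.mem_univ (⟨n - 1, by omega⟩ : Fin n))]
    congr 1
    · rw [hμlast]
    · have hers : ∀ i ∈ Finset.univ.erase (⟨n - 1, by omega⟩ : Fin n),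
          (∑ k : Fin p, |N - μ i + bvals k - ctr|)
            = (p:ℝ) * μ i + ∑ k : Fin p, (ctr - N - bvals k) := by
        intro i hi
        exact habs i (Finset.mem_erase.mp hi).1
      rw [Finset.sum_congr rfl hers, Finset.sum_add_distrib, ← Finset.mul_sum]
      have hmuerase : ∑ i ∈ Finset.univ.erase (⟨n - 1, by omega⟩ : Fin n), μ i = 2*(m:ℝ) := by
        have := Finset.add_sum_erase Finset.univ μ
          (Finset.mem_univ (⟨n - 1, by omega⟩ : Fin n))
        rw [hμlast, zero_add] at this
        rw [this, hsum_mu]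
      rw [hmuerase, Finset.sum_const, Finset.card_erase_of_mem (Finset.mem_univ _)]
      simp only [Finset.card_univ, Fintype.card_fin, nsmul_eq_mul]
      rw [Nat.cast_sub (by omega : 1 ≤ n)]
      norm_num
  rw [hsplit]
  -- second block (Fin p part)
  have hsecond : ∀ j : Fin p, ∀ k : Fin p, dBig (Sum.inr j, k)
      = (if j.val = 0 then (0:ℝ) else N) + bvals k := by
    intro j k
    rw [hdBdef, hadef]
    simp only [Sum.elim_inr]
  rw [show (∑ j : Fin p, ∑ k : Fin p, |dBig (Sum.inr j, k) - ctr|)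
      = ∑ j : Fin p, ∑ k : Fin p, |(if j.val = 0 then (0:ℝ) else N) + bvals k - ctr| from
    Finset.sum_congr rfl fun j _ => Finset.sum_congr rfl fun k _ => by rw [hsecond j k]]
  rw [RHSval]
  rw [hctrdef, hNdef, hbdef]
  norm_num

end Master

end Aux
theorem stmt11 (n m p : ℕ) (hn : 2 ≤ n) (hp : 0 < p)
    (G₁ G₂ : SimpleGraph (Fin n))
    (hc₁ : G₁.Connected) (hc₂ : G₂.Connected)
    (hm₁ : edgeCount G₁ = m) (hm₂ : edgeCount G₂ = m)
    (μ ν : Fin n → ℝ) (hμmono : Antitone μ) (hνmono : Antitone ν)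
    (hμspec : lapSpec G₁ = Finset.univ.val.map μ)
    (hνspec : lapSpec G₂ = Finset.univ.val.map ν)
    (hμlast : μ ⟨n - 1, by omega⟩ = 0) (hνlast : ν ⟨n - 1, by omega⟩ = 0)
    (hμpos : 2 < μ ⟨n - 2, by omega⟩) (hνpos : 2 < ν ⟨n - 2, by omega⟩)
    (hcond : 2 * (m : ℝ) / ((p : ℝ) + (n : ℝ)) < min (μ ⟨n - 2, by omega⟩ - 2) (ν ⟨n - 2, by omega⟩ - 2)) :
    lapEnergy ((SimpleGraph.join G₁ᶜ (⊤ : SimpleGraph (Fin p))) □ (⊤ : SimpleGraph (Fin p))) =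
      lapEnergy ((SimpleGraph.join G₂ᶜ (⊤ : SimpleGraph (Fin p))) □ (⊤ : SimpleGraph (Fin p))) := by
  classical
  have h1 := master n m p hn hp G₁ hc₁ hm₁ μ hμmono hμspec hμlast hμpos
    (lt_of_lt_of_le hcond (min_le_left _ _))
  have h2 := master n m p hn hp G₂ hc₂ hm₂ ν hνmono hνspec hνlast hνpos
    (lt_of_lt_of_le hcond (min_le_right _ _))
  rw [h1, h2]
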